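/- arXiv:2507.16349 — 2 statements merged into one kernel-verified Lean document; each statement's English description precedes it below -/
import Mathlib

section
/- Let A be a bounded self-adjoint positive definite operator on a real Hilbert space H, defining the inner product a(v, w) = ⟨Av, w⟩. For φ with ‖φ‖ = 1 and the gradient of a functional E at φ represented by r ∈ H (i.e., DE(φ)[v] = ⟨r, v⟩ for all v), the unique vector g ∈ T_φS = {v : ⟨φ, v⟩ = 0} satisfying a(g, v) = ⟨r, v⟩ for all v ∈ T_φS is g = A⁻¹r − (⟨A⁻¹r, φ⟩/⟨A⁻¹φ, φ⟩) A⁻¹φ. -/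
open scoped RealInnerProductSpace

/-- Formula for the Riemannian gradient with respect to the metric `a(v, w) = ⟨Av, w⟩` on the
unit sphere: for a unit vector `φ` and a gradient representative `r` of a functional (i.e.
`DE(φ)[v] = ⟨r, v⟩`), the unique `g` with `⟨φ, g⟩ = 0` and `a(g, v) = ⟨r, v⟩` for all tangent
`v` is `g = A⁻¹r − (⟨A⁻¹r, φ⟩/⟨A⁻¹φ, φ⟩) A⁻¹φ`. -/
theorem riemannian_gradient_formula
    {H : Type*} [NormedAddCommGroup H] [InnerProductSpace ℝ H] [CompleteSpace H]
    (A Ainv : H →L[ℝ] H)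
    (hsa : ∀ x y : H, ⟪A x, y⟫ = ⟪x, A y⟫)
    (hpos : ∃ c > 0, ∀ v : H, c * ‖v‖ ^ 2 ≤ ⟪A v, v⟫)
    (hAAinv : ∀ x, A (Ainv x) = x) (hAinvA : ∀ x, Ainv (A x) = x)
    (φ : H) (hφ : ‖φ‖ = 1) (E : H → ℝ) (E' : H →L[ℝ] ℝ) (r : H)
    (hE : HasFDerivAt E E' φ) (hr : ∀ v : H, E' v = ⟪r, v⟫) :
    (⟪φ, Ainv r - (⟪Ainv r, φ⟫ / ⟪Ainv φ, φ⟫) • Ainv φ⟫ = 0 ∧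
      ∀ v : H, ⟪φ, v⟫ = 0 →
        ⟪A (Ainv r - (⟪Ainv r, φ⟫ / ⟪Ainv φ, φ⟫) • Ainv φ), v⟫ = ⟪r, v⟫) ∧
    ∀ g : H, (⟪φ, g⟫ = 0 ∧ ∀ v : H, ⟪φ, v⟫ = 0 → ⟪A g, v⟫ = ⟪r, v⟫) →
      g = Ainv r - (⟪Ainv r, φ⟫ / ⟪Ainv φ, φ⟫) • Ainv φ := by
  obtain ⟨c, hc, hcpos⟩ := hpos
  have hφ0 : φ ≠ 0 := by
    intro h; rw [h, norm_zero] at hφ; norm_num at hφ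
  have hAinvφ0 : Ainv φ ≠ 0 := by
    intro h
    have := hAAinv φ
    rw [h, map_zero] at this
    exact hφ0 this.symm
  have hd : (0:ℝ) < ⟪Ainv φ, φ⟫ := by
    have h1 := hcpos (Ainv φ)
    rw [hAAinv φ] at h1
    have h2 : (0:ℝ) < c * ‖Ainv φ‖ ^ 2 :=
      mul_pos hc (pow_pos (norm_pos_iff.mpr hAinvφ0) 2)
    have : ⟪φ, Ainv φ⟫ > 0 := lt_of_lt_of_le h2 h1
    rwa [real_inner_comm] at this
  have hdne : ⟪Ainv φ, φ⟫ ≠ 0 := ne_of_gt hd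
  set t : ℝ := ⟪Ainv r, φ⟫ / ⟪Ainv φ, φ⟫ with ht
  have hortho : ⟪φ, Ainv r - t • Ainv φ⟫ = 0 := by
    rw [inner_sub_right, real_inner_smul_right, real_inner_comm (Ainv r) φ,
      real_inner_comm (Ainv φ) φ]
    rw [ht]; field_simp; ring
  have hAg : A (Ainv r - t • Ainv φ) = r - t • φ := by
    rw [map_sub, map_smul, hAAinv, hAAinv]
  have htan : ∀ v : H, ⟪φ, v⟫ = 0 → ⟪A (Ainv r - t • Ainv φ), v⟫ = ⟪r, v⟫ := by
    intro v hv
    rw [hAg, inner_sub_left, real_inner_smul_left, hv]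
    ring
  refine ⟨⟨hortho, htan⟩, ?_⟩
  rintro g ⟨hg1, hg2⟩
  have hdiff : ∀ v : H, ⟪φ, v⟫ = 0 → ⟪A (g - (Ainv r - t • Ainv φ)), v⟫ = 0 := by
    intro v hv
    rw [map_sub, inner_sub_left, hg2 v hv, htan v hv, sub_self]
  have hgt : ⟪φ, g - (Ainv r - t • Ainv φ)⟫ = 0 := by
    rw [inner_sub_right, hg1, hortho, sub_self]
  have key := hdiff _ hgt
  have hle := hcpos (g - (Ainv r - t • Ainv φ))
  rw [key] at hle
  have hn : ‖g - (Ainv r - t • Ainv φ)‖ ^ 2 ≤ 0 := by nlinarith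
  have : g - (Ainv r - t • Ainv φ) = 0 := by
    have := sq_nonneg ‖g - (Ainv r - t • Ainv φ)‖
    have h0 : ‖g - (Ainv r - t • Ainv φ)‖ = 0 := by nlinarith
    exact norm_eq_zero.mp h0
  exact sub_eq_zero.mp this
end

section
/- In the setting of the previous lemma with r = Aφ: the energy-adaptive gradient g = φ − A⁻¹φ/⟨A⁻¹φ, φ⟩ satisfies a(g, g) = ⟨Aφ, φ⟩ − 1/⟨A⁻¹φ, φ⟩, and this quantity is nonnegative, with equality zero iff φ is an eigenvector of A. -/
open scoped RealInnerProductSpace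

/-- For the energy-adaptive gradient `g = φ − A⁻¹φ/⟨A⁻¹φ, φ⟩` of a unit vector `φ`, one has
`a(g, g) = ⟨Aφ, φ⟩ − 1/⟨A⁻¹φ, φ⟩ ≥ 0`, with equality iff `φ` is an eigenvector of `A`. -/
theorem energy_adaptive_gradient_norm_sq
    {H : Type*} [NormedAddCommGroup H] [InnerProductSpace ℝ H] [CompleteSpace H]
    (A Ainv : H →L[ℝ] H)
    (hsa : ∀ x y : H, ⟪A x, y⟫ = ⟪x, A y⟫)
    (hpos : ∃ c > 0, ∀ v : H, c * ‖v‖ ^ 2 ≤ ⟪A v, v⟫)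
    (hAAinv : ∀ x, A (Ainv x) = x) (hAinvA : ∀ x, Ainv (A x) = x)
    (φ : H) (hφ : ‖φ‖ = 1) :
    ⟪A (φ - (⟪Ainv φ, φ⟫)⁻¹ • Ainv φ), φ - (⟪Ainv φ, φ⟫)⁻¹ • Ainv φ⟫
        = ⟪A φ, φ⟫ - 1 / ⟪Ainv φ, φ⟫ ∧
    0 ≤ ⟪A φ, φ⟫ - 1 / ⟪Ainv φ, φ⟫ ∧
    (⟪A φ, φ⟫ - 1 / ⟪Ainv φ, φ⟫ = 0 ↔ ∃ lam : ℝ, A φ = lam • φ) := by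
  obtain ⟨c, hc, hposc⟩ := hpos
  have hφ0 : φ ≠ 0 := by
    intro h; rw [h, norm_zero] at hφ; linarith
  have hφφ : ⟪φ, φ⟫ = 1 := by
    rw [real_inner_self_eq_norm_sq, hφ]; norm_num
  set t : ℝ := ⟪Ainv φ, φ⟫ with ht
  have hv0 : Ainv φ ≠ 0 := by
    intro h
    have h2 := hAAinv φ
    rw [h, map_zero] at h2
    exact hφ0 h2.symm
  have htpos : 0 < t := by
    have h1 : c * ‖Ainv φ‖ ^ 2 ≤ ⟪A (Ainv φ), Ainv φ⟫ := hposc _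
    rw [hAAinv] at h1
    have h2 : 0 < ‖Ainv φ‖ ^ 2 := pow_pos (norm_pos_iff.mpr hv0) 2
    have h3 : 0 < c * ‖Ainv φ‖ ^ 2 := mul_pos hc h2
    calc (0:ℝ) < c * ‖Ainv φ‖ ^ 2 := h3
      _ ≤ ⟪φ, Ainv φ⟫ := h1
      _ = t := real_inner_comm _ _
  have e1 : ⟪A (Ainv φ), φ⟫ = 1 := by rw [hAAinv, hφφ]
  have e2 : ⟪A φ, Ainv φ⟫ = 1 := by rw [hsa, hAAinv, hφφ]
  have e3 : ⟪A (Ainv φ), Ainv φ⟫ = t := by rw [hAAinv]; exact real_inner_comm _ _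
  have heq : ⟪A (φ - t⁻¹ • Ainv φ), φ - t⁻¹ • Ainv φ⟫ = ⟪A φ, φ⟫ - 1 / t := by
    simp only [map_sub, map_smul, inner_sub_left, inner_sub_right,
      real_inner_smul_left, real_inner_smul_right, e1, e2, e3]
    field_simp
    ring
  refine ⟨heq, ?_, ?_, ?_⟩
  · rw [← heq]
    calc (0:ℝ) ≤ c * ‖φ - t⁻¹ • Ainv φ‖ ^ 2 := by positivity
      _ ≤ _ := hposc _
  · intro h0
    have hg : φ - t⁻¹ • Ainv φ = 0 := by
      have h1 : c * ‖φ - t⁻¹ • Ainv φ‖ ^ 2 ≤ 0 := by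
        have h2 := hposc (φ - t⁻¹ • Ainv φ)
        rw [heq, h0] at h2
        exact h2
      have h3 : ‖φ - t⁻¹ • Ainv φ‖ = 0 := by
        by_contra hne
        have hp : 0 < ‖φ - t⁻¹ • Ainv φ‖ :=
          lt_of_le_of_ne (norm_nonneg _) (Ne.symm hne)
        nlinarith [mul_pos hc (pow_pos hp 2)]
      exact norm_eq_zero.mp h3
    have hφeq : φ = t⁻¹ • Ainv φ := sub_eq_zero.mp hg
    refine ⟨t⁻¹, ?_⟩
    calc A φ = A (t⁻¹ • Ainv φ) := by rw [← hφeq]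
      _ = t⁻¹ • A (Ainv φ) := map_smul _ _ _
      _ = t⁻¹ • φ := by rw [hAAinv]
  · rintro ⟨lam, hlam⟩
    have hlampos : 0 < lam := by
      have h1 : c * ‖φ‖ ^ 2 ≤ ⟪A φ, φ⟫ := hposc _
      rw [hφ, hlam, real_inner_smul_left, hφφ] at h1
      simpa using lt_of_lt_of_le hc (by simpa using h1)
    have hAinvφ : Ainv φ = lam⁻¹ • φ := by
      have h1 := hAinvA φ
      rw [hlam, map_smul] at h1
      calc Ainv φ = lam⁻¹ • (lam • Ainv φ) := by
            rw [smul_smul, inv_mul_cancel₀ hlampos.ne', one_smul]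
        _ = lam⁻¹ • φ := by rw [h1]
    have htval : t = lam⁻¹ := by
      rw [ht, hAinvφ, real_inner_smul_left, hφφ, mul_one]
    have hAφφ : ⟪A φ, φ⟫ = lam := by
      rw [hlam, real_inner_smul_left, hφφ, mul_one]
    rw [hAφφ, htval, one_div, inv_inv, sub_self]
end
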